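/- arXiv:math/0502167 — 5 statements merged into one kernel-verified Lean document; each statement's English description precedes it below -/
import Mathlib

section
/- If a point X of the polytope P lies on the hyperplane σ given by x₁₂+x₂₃+x₃₁+x₁₃+x₃₂+x₂₁ = 1, then X lies on all three hyperplanes α₁, α₂, α₃; that is, all three defining inequalities of P hold with equality at X. Consequently σ does not support a facet of P. -/
/-- The polytope `P ⊂ ℝ⁶` in coordinates `(x₁₂, x₂₃, x₃₁, x₁₃, x₃₂, x₂₁)`,
indexed as `(x 0, x 1, x 2, x 3, x 4, x 5)`. -/
def polyP : Set (Fin 6 → ℝ) :=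
  {x | x 0 + x 3 + 2 * (x 5 + x 2) ≤ 1 ∧
       x 5 + x 1 + 2 * (x 0 + x 4) ≤ 1 ∧
       x 2 + x 4 + 2 * (x 3 + x 1) ≤ 1 ∧
       ∀ i, 0 ≤ x i}

/-- If a point `X ∈ P` lies on the hyperplane `σ : x₁₂+x₂₃+x₃₁+x₁₃+x₃₂+x₂₁ = 1`,
then `X` lies on all three hyperplanes `α₁, α₂, α₃`. -/
theorem polyP_on_sigma_on_all_alphas (x : Fin 6 → ℝ) (hx : x ∈ polyP)
    (hσ : x 0 + x 1 + x 2 + x 3 + x 4 + x 5 = 1) :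
    x 0 + x 3 + 2 * (x 5 + x 2) = 1 ∧
    x 5 + x 1 + 2 * (x 0 + x 4) = 1 ∧
    x 2 + x 4 + 2 * (x 3 + x 1) = 1 := by
  obtain ⟨h1, h2, h3, _⟩ := hx
  refine ⟨by linarith, by linarith, by linarith⟩
end

section
/- Vol(P₁) = Vol(P₂) = Vol(P₃) = (1/3)·Vol(P), where P_j = conv({O} ∪ (P ∩ α_j)) for j = 1, 2, 3. -/
open MeasureTheory

/-- The hyperplane `α₁ : x₁₂+x₁₃+2(x₂₁+x₃₁) = 1`. -/
def alpha1 : Set (Fin 6 → ℝ) :=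
  {x | x 0 + x 3 + 2 * (x 5 + x 2) = 1}

/-- The hyperplane `α₂ : x₂₁+x₂₃+2(x₁₂+x₃₂) = 1`. -/
def alpha2 : Set (Fin 6 → ℝ) :=
  {x | x 5 + x 1 + 2 * (x 0 + x 4) = 1}

/-- The hyperplane `α₃ : x₃₁+x₃₂+2(x₁₃+x₂₃) = 1`. -/
def alpha3 : Set (Fin 6 → ℝ) :=
  {x | x 2 + x 4 + 2 * (x 3 + x 1) = 1}

/-- `P₁ = conv({O} ∪ (P ∩ α₁))`. -/
noncomputable def P1 : Set (Fin 6 → ℝ) :=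
  convexHull ℝ ({0} ∪ (polyP ∩ alpha1))

/-- `P₂ = conv({O} ∪ (P ∩ α₂))`. -/
noncomputable def P2 : Set (Fin 6 → ℝ) :=
  convexHull ℝ ({0} ∪ (polyP ∩ alpha2))

/-- `P₃ = conv({O} ∪ (P ∩ α₃))`. -/
noncomputable def P3 : Set (Fin 6 → ℝ) :=
  convexHull ℝ ({0} ∪ (polyP ∩ alpha3))

def vf1 : (Fin 6 → ℝ) → ℝ := fun x => x 0 + x 3 + 2 * (x 5 + x 2)
def vf2 : (Fin 6 → ℝ) → ℝ := fun x => x 5 + x 1 + 2 * (x 0 + x 4)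
def vf3 : (Fin 6 → ℝ) → ℝ := fun x => x 2 + x 4 + 2 * (x 3 + x 1)

lemma vf1_lin (a b : ℝ) (x y : Fin 6 → ℝ) : vf1 (a • x + b • y) = a * vf1 x + b * vf1 y := by
  simp [vf1, Pi.add_apply, Pi.smul_apply, smul_eq_mul]; ring
lemma vf2_lin (a b : ℝ) (x y : Fin 6 → ℝ) : vf2 (a • x + b • y) = a * vf2 x + b * vf2 y := by
  simp [vf2, Pi.add_apply, Pi.smul_apply, smul_eq_mul]; ring
lemma vf3_lin (a b : ℝ) (x y : Fin 6 → ℝ) : vf3 (a • x + b • y) = a * vf3 x + b * vf3 y := by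
  simp [vf3, Pi.add_apply, Pi.smul_apply, smul_eq_mul]; ring

lemma all_zero {x : Fin 6 → ℝ} (hx : ∀ i, 0 ≤ x i)
    (h1 : vf1 x ≤ 0) (h2 : vf2 x ≤ 0) (h3 : vf3 x ≤ 0) : x = 0 := by
  have hs : x 0 + x 1 + x 2 + x 3 + x 4 + x 5 ≤ 0 := by
    simp only [vf1, vf2, vf3] at h1 h2 h3; linarith
  have hsum : ∑ j, x j ≤ 0 := by rw [Fin.sum_univ_six]; linarith
  funext i
  exact le_antisymm
    (le_trans (Finset.single_le_sum (fun j _ => hx j) (Finset.mem_univ i)) hsum) (hx i)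

lemma hull_eq (f g h : (Fin 6 → ℝ) → ℝ)
    (hf : ∀ a b x y, f (a • x + b • y) = a * f x + b * f y)
    (hg : ∀ a b x y, g (a • x + b • y) = a * g x + b * g y)
    (hh : ∀ a b x y, h (a • x + b • y) = a * h x + b * h y)
    (hzero : ∀ x : Fin 6 → ℝ, (∀ i, 0 ≤ x i) → f x ≤ 0 → g x ≤ 0 → h x ≤ 0 → x = 0) :
    convexHull ℝ ({0} ∪
        ({x | f x ≤ 1 ∧ g x ≤ 1 ∧ h x ≤ 1 ∧ ∀ i, 0 ≤ x i} ∩ {x | f x = 1}))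
      = {x | f x ≤ 1 ∧ g x ≤ 1 ∧ h x ≤ 1 ∧ (∀ i, 0 ≤ x i) ∧ g x ≤ f x ∧ h x ≤ f x} := by
  have smul_of_lin : ∀ (k : (Fin 6 → ℝ) → ℝ),
      (∀ a b x y, k (a • x + b • y) = a * k x + b * k y) →
      ∀ (a : ℝ) (x : Fin 6 → ℝ), k (a • x) = a * k x := by
    intro k hk a x
    have : a • x = a • x + (0:ℝ) • x := by simp
    rw [this, hk]; ring
  set S : Set (Fin 6 → ℝ) :=
    {0} ∪ ({x | f x ≤ 1 ∧ g x ≤ 1 ∧ h x ≤ 1 ∧ ∀ i, 0 ≤ x i} ∩ {x | f x = 1}) with hSdef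
  apply le_antisymm
  · -- hull ⊆ Q
    apply convexHull_min
    · rintro x (rfl | ⟨⟨h1, h2, h3, h4⟩, h5⟩)
      · have f0 : f 0 = 0 := by
          have := smul_of_lin f hf 0 0; simpa using this
        have g0 : g 0 = 0 := by
          have := smul_of_lin g hg 0 0; simpa using this
        have h0 : h 0 = 0 := by
          have := smul_of_lin h hh 0 0; simpa using this
        refine ⟨by simp [f0], by simp [g0], by simp [h0], by simp, by simp [f0, g0], by simp [f0, h0]⟩
      · exact ⟨h1, h2, h3, h4, by rw [h5] at h1 ⊢; exact h2, by rw [h5] at h1 ⊢; exact h3⟩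
    · -- convexity
      rintro x ⟨hx1, hx2, hx3, hx4, hx5, hx6⟩ y ⟨hy1, hy2, hy3, hy4, hy5, hy6⟩ a b ha hb hab
      refine ⟨?_, ?_, ?_, ?_, ?_, ?_⟩
      · rw [hf]; nlinarith [mul_le_mul_of_nonneg_left hx1 ha, mul_le_mul_of_nonneg_left hy1 hb]
      · rw [hg]; nlinarith [mul_le_mul_of_nonneg_left hx2 ha, mul_le_mul_of_nonneg_left hy2 hb]
      · rw [hh]; nlinarith [mul_le_mul_of_nonneg_left hx3 ha, mul_le_mul_of_nonneg_left hy3 hb]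
      · intro i
        have : (a • x + b • y) i = a * x i + b * y i := by simp [smul_eq_mul]
        rw [this]
        have := hx4 i; have := hy4 i; positivity
      · rw [hg, hf]
        exact add_le_add (mul_le_mul_of_nonneg_left hx5 ha) (mul_le_mul_of_nonneg_left hy5 hb)
      · rw [hh, hf]
        exact add_le_add (mul_le_mul_of_nonneg_left hx6 ha) (mul_le_mul_of_nonneg_left hy6 hb)
  · -- Q ⊆ hull
    rintro x ⟨hx1, hx2, hx3, hx4, hx5, hx6⟩
    by_cases ht : f x ≤ 0
    · have hx0 : x = 0 := hzero x hx4 ht (le_trans hx5 ht) (le_trans hx6 ht)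
      exact subset_convexHull ℝ S (by simp [hSdef, hx0])
    · push_neg at ht
      set t : ℝ := f x with htdef
      have hy : (t⁻¹ • x) ∈ S := by
        refine Or.inr ⟨⟨?_, ?_, ?_, ?_⟩, ?_⟩
        · rw [smul_of_lin f hf]
          rw [inv_mul_cancel₀ (ne_of_gt ht)]
        · rw [smul_of_lin g hg]
          rw [inv_mul_le_one₀ ht]; exact le_trans hx5 (le_refl _) |>.trans (le_refl _) |>.trans (by linarith)
        · rw [smul_of_lin h hh]
          rw [inv_mul_le_one₀ ht]; linarith
        · intro i
          have : (t⁻¹ • x) i = t⁻¹ * x i := by simp [smul_eq_mul]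
          rw [this]; exact mul_nonneg (by positivity) (hx4 i)
        · show f _ = 1
          rw [smul_of_lin f hf, inv_mul_cancel₀ (ne_of_gt ht)]
      have h0 : (0 : Fin 6 → ℝ) ∈ S := Or.inl rfl
      have hcomb := (convex_convexHull ℝ S) (subset_convexHull ℝ S hy) (subset_convexHull ℝ S h0)
        (le_of_lt ht) (by linarith : (0:ℝ) ≤ 1 - t) (by ring)
      have : t • (t⁻¹ • x) + (1 - t) • (0 : Fin 6 → ℝ) = x := by
        rw [smul_smul, mul_inv_cancel₀ (ne_of_gt ht)]; simp
      rwa [this] at hcomb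


def Q1 : Set (Fin 6 → ℝ) :=
  {x | vf1 x ≤ 1 ∧ vf2 x ≤ 1 ∧ vf3 x ≤ 1 ∧ (∀ i, 0 ≤ x i) ∧ vf2 x ≤ vf1 x ∧ vf3 x ≤ vf1 x}
def Q2 : Set (Fin 6 → ℝ) :=
  {x | vf1 x ≤ 1 ∧ vf2 x ≤ 1 ∧ vf3 x ≤ 1 ∧ (∀ i, 0 ≤ x i) ∧ vf1 x ≤ vf2 x ∧ vf3 x ≤ vf2 x}
def Q3 : Set (Fin 6 → ℝ) :=
  {x | vf1 x ≤ 1 ∧ vf2 x ≤ 1 ∧ vf3 x ≤ 1 ∧ (∀ i, 0 ≤ x i) ∧ vf1 x ≤ vf3 x ∧ vf2 x ≤ vf3 x}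

lemma P1_eq : P1 = Q1 := by
  have h := hull_eq vf1 vf2 vf3 vf1_lin vf2_lin vf3_lin
    (fun x hx h1 h2 h3 => all_zero hx h1 h2 h3)
  have hset : ({x | vf1 x ≤ 1 ∧ vf2 x ≤ 1 ∧ vf3 x ≤ 1 ∧ ∀ i, 0 ≤ x i} ∩ {x | vf1 x = 1})
      = polyP ∩ alpha1 := rfl
  rw [hset] at h
  exact h

lemma P2_eq : P2 = Q2 := by
  have h := hull_eq vf2 vf1 vf3 vf2_lin vf1_lin vf3_lin
    (fun x hx h2 h1 h3 => all_zero hx h1 h2 h3)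
  have hset : ({x | vf2 x ≤ 1 ∧ vf1 x ≤ 1 ∧ vf3 x ≤ 1 ∧ ∀ i, 0 ≤ x i} ∩ {x | vf2 x = 1})
      = polyP ∩ alpha2 := by
    ext x; simp only [Set.mem_inter_iff, Set.mem_setOf_eq]
    constructor
    · rintro ⟨⟨a, b, c, d⟩, e⟩; exact ⟨⟨b, a, c, d⟩, e⟩
    · rintro ⟨⟨a, b, c, d⟩, e⟩; exact ⟨⟨b, a, c, d⟩, e⟩
  rw [hset] at h
  rw [P2, h]
  ext x; simp only [Set.mem_setOf_eq, Q2]; tauto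

lemma P3_eq : P3 = Q3 := by
  have h := hull_eq vf3 vf1 vf2 vf3_lin vf1_lin vf2_lin
    (fun x hx h3 h1 h2 => all_zero hx h1 h2 h3)
  have hset : ({x | vf3 x ≤ 1 ∧ vf1 x ≤ 1 ∧ vf2 x ≤ 1 ∧ ∀ i, 0 ≤ x i} ∩ {x | vf3 x = 1})
      = polyP ∩ alpha3 := by
    ext x; simp only [Set.mem_inter_iff, Set.mem_setOf_eq]
    constructor
    · rintro ⟨⟨a, b, c, d⟩, e⟩; exact ⟨⟨b, c, a, d⟩, e⟩
    · rintro ⟨⟨a, b, c, d⟩, e⟩; exact ⟨⟨c, a, b, d⟩, e⟩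
  rw [hset] at h
  rw [P3, h]
  ext x; simp only [Set.mem_setOf_eq, Q3]; tauto

lemma mvf1 : Measurable vf1 := by unfold vf1; fun_prop
lemma mvf2 : Measurable vf2 := by unfold vf2; fun_prop
lemma mvf3 : Measurable vf3 := by unfold vf3; fun_prop

lemma meas_aux (c1 c2 c3 : (Fin 6 → ℝ) → ℝ) (h1 : Measurable c1) (h2 : Measurable c2)
    (h3 : Measurable c3) :
    MeasurableSet {x : Fin 6 → ℝ | vf1 x ≤ 1 ∧ vf2 x ≤ 1 ∧ vf3 x ≤ 1 ∧ (∀ i, 0 ≤ x i)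
      ∧ c1 x ≤ c2 x ∧ c3 x ≤ c2 x} := by
  refine MeasurableSet.inter (measurableSet_le mvf1 measurable_const) ?_
  refine MeasurableSet.inter (measurableSet_le mvf2 measurable_const) ?_
  refine MeasurableSet.inter (measurableSet_le mvf3 measurable_const) ?_
  refine MeasurableSet.inter ?_ ?_
  · have he : {x : Fin 6 → ℝ | ∀ i, 0 ≤ x i} = ⋂ i, {x | 0 ≤ x i} := by
      ext x; simp [Set.mem_iInter]
    show MeasurableSet {x : Fin 6 → ℝ | ∀ i, 0 ≤ x i}
    rw [he]
    exact MeasurableSet.iInter fun i =>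
      measurableSet_le measurable_const (measurable_pi_apply i)
  exact MeasurableSet.inter (measurableSet_le h1 h2) (measurableSet_le h3 h2)

lemma mQ1 : MeasurableSet Q1 := meas_aux vf2 vf1 vf3 mvf2 mvf1 mvf3
lemma mQ2 : MeasurableSet Q2 := meas_aux vf1 vf2 vf3 mvf1 mvf2 mvf3
lemma mQ3 : MeasurableSet Q3 := meas_aux vf1 vf3 vf2 mvf1 mvf3 mvf2

/-- A "hyperplane" `{x | f x = g x}` for distinct linear functionals is null. -/
lemma null_aux (f g : (Fin 6 → ℝ) → ℝ)
    (hf : ∀ a b x y, f (a • x + b • y) = a * f x + b * f y)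
    (hg : ∀ a b x y, g (a • x + b • y) = a * g x + b * g y)
    (v : Fin 6 → ℝ) (hv : f v ≠ g v) :
    volume {x : Fin 6 → ℝ | f x = g x} = 0 := by
  have addsmul : ∀ (k : (Fin 6 → ℝ) → ℝ),
      (∀ a b x y, k (a • x + b • y) = a * k x + b * k y) →
      (∀ x y : Fin 6 → ℝ, k (x + y) = k x + k y) ∧ (∀ (a : ℝ) x, k (a • x) = a * k x) := by
    intro k hk
    constructor
    · intro x y
      have := hk 1 1 x y; simpa using this
    · intro a x
      have h0 : a • x = a • x + (0:ℝ) • x := by simp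
      rw [h0, hk]; ring
  obtain ⟨hfa, hfs⟩ := addsmul f hf
  obtain ⟨hga, hgs⟩ := addsmul g hg
  set L : (Fin 6 → ℝ) →ₗ[ℝ] ℝ :=
    { toFun := fun x => f x - g x
      map_add' := fun x y => by
        show f (x + y) - g (x + y) = (f x - g x) + (f y - g y)
        rw [hfa, hga]; ring
      map_smul' := fun a x => by
        show f (a • x) - g (a • x) = a * (f x - g x)
        rw [hfs, hgs]; ring }
  have hker : LinearMap.ker L ≠ ⊤ := by
    intro htop
    have : L v = 0 := by
      have : v ∈ LinearMap.ker L := by rw [htop]; trivial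
      simpa using this
    simp only [L, LinearMap.coe_mk, AddHom.coe_mk] at this
    exact hv (by linarith)
  have hsub : {x : Fin 6 → ℝ | f x = g x} = (LinearMap.ker L : Set (Fin 6 → ℝ)) := by
    ext x
    simp only [Set.mem_setOf_eq, SetLike.mem_coe, LinearMap.mem_ker, L, LinearMap.coe_mk,
      AddHom.coe_mk]
    constructor <;> intro h <;> linarith
  rw [hsub]
  exact Measure.addHaar_submodule volume _ hker

lemma e2fun : (fun i : Fin 6 => if i = 2 then (1:ℝ) else 0) 2 = 1 := by norm_num

lemma null12 : volume (Q1 ∩ Q2) = 0 := by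
  have hsub : Q1 ∩ Q2 ⊆ {x | vf1 x = vf2 x} := by
    rintro x ⟨⟨_, _, _, _, h1, _⟩, ⟨_, _, _, _, h2, _⟩⟩
    exact le_antisymm h2 h1
  refine le_antisymm (le_trans (measure_mono hsub) ?_) zero_le
  rw [null_aux vf1 vf2 vf1_lin vf2_lin ![0, 0, 1, 0, 0, 0]
    (by norm_num [vf1, vf2, show ((![0, 0, 1, 0, 0, 0] : Fin 6 → ℝ) 2) = 1 from rfl, show ((![0, 0, 1, 0, 0, 0] : Fin 6 → ℝ) 3) = 0 from rfl, show ((![0, 0, 1, 0, 0, 0] : Fin 6 → ℝ) 4) = 0 from rfl, show ((![0, 0, 1, 0, 0, 0] : Fin 6 → ℝ) 5) = 0 from rfl])]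

lemma null13 : volume (Q1 ∩ Q3) = 0 := by
  have hsub : Q1 ∩ Q3 ⊆ {x | vf1 x = vf3 x} := by
    rintro x ⟨⟨_, _, _, _, _, h1⟩, ⟨_, _, _, _, h2, _⟩⟩
    exact le_antisymm h2 h1
  refine le_antisymm (le_trans (measure_mono hsub) ?_) zero_le
  rw [null_aux vf1 vf3 vf1_lin vf3_lin ![1, 0, 0, 0, 0, 0]
    (by norm_num [vf1, vf3, show ((![1, 0, 0, 0, 0, 0] : Fin 6 → ℝ) 2) = 0 from rfl, show ((![1, 0, 0, 0, 0, 0] : Fin 6 → ℝ) 3) = 0 from rfl, show ((![1, 0, 0, 0, 0, 0] : Fin 6 → ℝ) 4) = 0 from rfl, show ((![1, 0, 0, 0, 0, 0] : Fin 6 → ℝ) 5) = 0 from rfl])]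

lemma null23 : volume (Q2 ∩ Q3) = 0 := by
  have hsub : Q2 ∩ Q3 ⊆ {x | vf2 x = vf3 x} := by
    rintro x ⟨⟨_, _, _, _, _, h1⟩, ⟨_, _, _, _, _, h2⟩⟩
    exact le_antisymm h2 h1
  refine le_antisymm (le_trans (measure_mono hsub) ?_) zero_le
  rw [null_aux vf2 vf3 vf2_lin vf3_lin ![0, 1, 0, 0, 0, 0]
    (by norm_num [vf2, vf3, show ((![0, 1, 0, 0, 0, 0] : Fin 6 → ℝ) 2) = 0 from rfl, show ((![0, 1, 0, 0, 0, 0] : Fin 6 → ℝ) 3) = 0 from rfl, show ((![0, 1, 0, 0, 0, 0] : Fin 6 → ℝ) 4) = 0 from rfl, show ((![0, 1, 0, 0, 0, 0] : Fin 6 → ℝ) 5) = 0 from rfl])]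

lemma union_eq : Q1 ∪ Q2 ∪ Q3 = polyP := by
  ext x
  simp only [Set.mem_union, Q1, Q2, Q3, polyP, Set.mem_setOf_eq]
  constructor
  · rintro ((⟨a, b, c, d, _, _⟩ | ⟨a, b, c, d, _, _⟩) | ⟨a, b, c, d, _, _⟩) <;> exact ⟨a, b, c, d⟩
  · rintro ⟨a, b, c, d⟩
    rcases le_total (vf1 x) (vf2 x) with h12 | h12
    · rcases le_total (vf2 x) (vf3 x) with h23 | h23
      · exact Or.inr ⟨a, b, c, d, le_trans h12 h23, h23⟩
      · exact Or.inl (Or.inr ⟨a, b, c, d, h12, h23⟩)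
    · rcases le_total (vf1 x) (vf3 x) with h13 | h13
      · exact Or.inr ⟨a, b, c, d, h13, le_trans h12 h13⟩
      · exact Or.inl (Or.inl ⟨a, b, c, d, h12, h13⟩)

noncomputable def sig : Fin 6 ≃ Fin 6 where
  toFun := ![1, 2, 0, 5, 3, 4]
  invFun := ![2, 0, 1, 4, 5, 3]
  left_inv := by decide
  right_inv := by decide

lemma comp_mem1 (x : Fin 6 → ℝ) : (fun b => x (sig b)) ∈ Q1 ↔ x ∈ Q2 := by
  simp only [Q1, Q2, Set.mem_setOf_eq, vf1, vf2, vf3]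
  have h0 : sig 0 = 1 := rfl
  have h1 : sig 1 = 2 := rfl
  have h2 : sig 2 = 0 := rfl
  have h3 : sig 3 = 5 := rfl
  have h4 : sig 4 = 3 := rfl
  have h5 : sig 5 = 4 := rfl
  rw [h0, h1, h2, h3, h4, h5]
  constructor
  · rintro ⟨a, b, c, d, e, f⟩
    refine ⟨by linarith, by linarith, by linarith, ?_, by linarith, by linarith⟩
    intro i; have := d (sig.symm i); simpa using this
  · rintro ⟨a, b, c, d, e, f⟩
    refine ⟨by linarith, by linarith, by linarith, fun i => d (sig i), by linarith, by linarith⟩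

lemma comp_mem2 (x : Fin 6 → ℝ) : (fun b => x (sig b)) ∈ Q2 ↔ x ∈ Q3 := by
  simp only [Q2, Q3, Set.mem_setOf_eq, vf1, vf2, vf3]
  have h0 : sig 0 = 1 := rfl
  have h1 : sig 1 = 2 := rfl
  have h2 : sig 2 = 0 := rfl
  have h3 : sig 3 = 5 := rfl
  have h4 : sig 4 = 3 := rfl
  have h5 : sig 5 = 4 := rfl
  rw [h0, h1, h2, h3, h4, h5]
  constructor
  · rintro ⟨a, b, c, d, e, f⟩
    refine ⟨by linarith, by linarith, by linarith, ?_, by linarith, by linarith⟩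
    intro i; have := d (sig.symm i); simpa using this
  · rintro ⟨a, b, c, d, e, f⟩
    refine ⟨by linarith, by linarith, by linarith, fun i => d (sig i), by linarith, by linarith⟩

lemma vol_eq12 : volume Q1 = volume Q2 := by
  have hmp : MeasurePreserving
      ((MeasurableEquiv.piCongrLeft (fun _ : Fin 6 => ℝ) sig).symm)
      (volume : Measure (Fin 6 → ℝ)) volume :=
    (volume_measurePreserving_piCongrLeft (fun _ : Fin 6 => ℝ) sig).symm _
  have hpre : (MeasurableEquiv.piCongrLeft (fun _ : Fin 6 => ℝ) sig).symm ⁻¹' Q1 = Q2 := by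
    ext x
    have : (MeasurableEquiv.piCongrLeft (fun _ : Fin 6 => ℝ) sig).symm x
        = fun b => x (sig b) := rfl
    rw [Set.mem_preimage, this]
    exact comp_mem1 x
  calc volume Q1 = volume ((MeasurableEquiv.piCongrLeft (fun _ : Fin 6 => ℝ) sig).symm ⁻¹' Q1) :=
        (hmp.measure_preimage mQ1.nullMeasurableSet).symm
    _ = volume Q2 := by rw [hpre]

lemma vol_eq23 : volume Q2 = volume Q3 := by
  have hmp : MeasurePreserving
      ((MeasurableEquiv.piCongrLeft (fun _ : Fin 6 => ℝ) sig).symm)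
      (volume : Measure (Fin 6 → ℝ)) volume :=
    (volume_measurePreserving_piCongrLeft (fun _ : Fin 6 => ℝ) sig).symm _
  have hpre : (MeasurableEquiv.piCongrLeft (fun _ : Fin 6 => ℝ) sig).symm ⁻¹' Q2 = Q3 := by
    ext x
    have : (MeasurableEquiv.piCongrLeft (fun _ : Fin 6 => ℝ) sig).symm x
        = fun b => x (sig b) := rfl
    rw [Set.mem_preimage, this]
    exact comp_mem2 x
  calc volume Q2 = volume ((MeasurableEquiv.piCongrLeft (fun _ : Fin 6 => ℝ) sig).symm ⁻¹' Q2) :=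
        (hmp.measure_preimage mQ2.nullMeasurableSet).symm
    _ = volume Q3 := by rw [hpre]

/-- `Vol(P₁) = Vol(P₂) = Vol(P₃) = (1/3)·Vol(P)`. -/
theorem volume_pieces :
    volume P1 = volume P2 ∧ volume P2 = volume P3 ∧
    volume P1 = (1 / 3) * volume polyP := by
  rw [P1_eq, P2_eq, P3_eq]
  refine ⟨vol_eq12, vol_eq23, ?_⟩
  have hP : volume polyP = volume Q1 + volume Q2 + volume Q3 := by
    rw [← union_eq]
    rw [Set.union_assoc]
    rw [measure_union₀ (mQ2.union mQ3).nullMeasurableSet ?_, measure_union₀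
      mQ3.nullMeasurableSet ?_, add_assoc]
    · rw [AEDisjoint]
      exact null23
    · rw [AEDisjoint, Set.inter_union_distrib_left]
      refine le_antisymm (le_trans (measure_union_le _ _) ?_) zero_le
      rw [null12, null13, add_zero]
  rw [hP, ← vol_eq12, ← vol_eq12.trans vol_eq23]
  have h3 : volume Q1 + volume Q1 + volume Q1 = 3 * volume Q1 := by ring
  rw [h3, ← mul_assoc, ENNReal.div_mul_cancel (by norm_num) (by norm_num), one_mul]
end

section
/- The polytope P is the union of the three pieces: P = P₁ ∪ P₂ ∪ P₃, where P_j = conv({O} ∪ (P ∩ α_j)) for j = 1, 2, 3. -/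
open MeasureTheory

lemma convex_polyP : Convex ℝ polyP := by
  intro x hx y hy a b ha hb hab
  obtain ⟨hx1, hx2, hx3, hx4⟩ := hx
  obtain ⟨hy1, hy2, hy3, hy4⟩ := hy
  refine ⟨?_, ?_, ?_, fun i => ?_⟩ <;>
    simp only [Pi.add_apply, Pi.smul_apply, smul_eq_mul]
  · nlinarith [hx4 0, hy4 0]
  · nlinarith
  · nlinarith
  · have := hx4 i; have := hy4 i; positivity

lemma zero_mem_polyP : (0 : Fin 6 → ℝ) ∈ polyP := by
  refine ⟨by norm_num, by norm_num, by norm_num, fun i => le_refl _⟩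

lemma piece_subset {A : Set (Fin 6 → ℝ)} :
    convexHull ℝ ({0} ∪ (polyP ∩ A)) ⊆ polyP := by
  apply convexHull_min _ convex_polyP
  rintro x (rfl | hx)
  · exact zero_mem_polyP
  · exact hx.1

lemma mem_piece {S : Set (Fin 6 → ℝ)} {x : Fin 6 → ℝ} {t : ℝ}
    (ht : 0 < t) (ht1 : t ≤ 1) (hy : t⁻¹ • x ∈ S) :
    x ∈ convexHull ℝ ({0} ∪ S) := by
  have h0 : (0 : Fin 6 → ℝ) ∈ convexHull ℝ ({0} ∪ S) :=
    subset_convexHull ℝ _ (Or.inl rfl)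
  have hy' := subset_convexHull ℝ ({0} ∪ S) (Or.inr hy)
  have := (convex_convexHull ℝ ({0} ∪ S)) h0 hy'
    (by linarith : (0:ℝ) ≤ 1 - t) ht.le (by ring)
  simpa [smul_smul, mul_inv_cancel₀ ht.ne'] using this

/-- `P = P₁ ∪ P₂ ∪ P₃`. -/
theorem polyP_eq_union_pieces : polyP = P1 ∪ P2 ∪ P3 := by
  ext x
  constructor
  · rintro ⟨h1, h2, h3, h4⟩
    set f1 := x 0 + x 3 + 2 * (x 5 + x 2) with hf1
    set f2 := x 5 + x 1 + 2 * (x 0 + x 4) with hf2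
    set f3 := x 2 + x 4 + 2 * (x 3 + x 1) with hf3
    have h40 := h4 0; have h41 := h4 1; have h42 := h4 2
    have h43 := h4 3; have h44 := h4 4; have h45 := h4 5
    set t := max f1 (max f2 f3) with hts
    have ht1 : f1 ≤ t := le_max_left _ _
    have ht2 : f2 ≤ t := le_trans (le_max_left _ _) (le_max_right _ _)
    have ht3 : f3 ≤ t := le_trans (le_max_right _ _) (le_max_right _ _)
    have htnn : 0 ≤ t := le_trans (by simp [hf1]; linarith) ht1
    rcases eq_or_lt_of_le htnn with hz | hpos
    · -- all coordinates zero
      have e1 : x 0 + x 3 + 2 * (x 5 + x 2) ≤ 0 := by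
        rw [← hf1, hz]; exact ht1
      have e2 : x 5 + x 1 + 2 * (x 0 + x 4) ≤ 0 := by
        rw [← hf2, hz]; exact ht2
      have z0 : x 0 = 0 := le_antisymm (by linarith) h40
      have z1 : x 1 = 0 := le_antisymm (by linarith) h41
      have z2 : x 2 = 0 := le_antisymm (by linarith) h42
      have z3 : x 3 = 0 := le_antisymm (by linarith) h43
      have z4 : x 4 = 0 := le_antisymm (by linarith) h44
      have z5 : x 5 = 0 := le_antisymm (by linarith) h45
      have hx0 : x = 0 := by
        funext i
        fin_cases i
        · exact z0
        · exact z1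
        · exact z2
        · exact z3
        · exact z4
        · exact z5
      left; left
      exact hx0 ▸ subset_convexHull ℝ _ (Or.inl rfl)
    · have htle1 : t ≤ 1 := by
        rcases max_cases f1 (max f2 f3) with ⟨he, _⟩ | ⟨he, _⟩
        · rw [hts, he]; exact h1
        · rw [hts, he]; exact max_le h2 h3
      have hinv : 0 ≤ t⁻¹ := inv_nonneg.mpr htnn
      have key : ∀ c : ℝ, c ≤ t → t⁻¹ * c ≤ 1 := by
        intro c hc
        calc t⁻¹ * c ≤ t⁻¹ * t := by nlinarith
        _ = 1 := inv_mul_cancel₀ hpos.ne'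
      have hyP : t⁻¹ • x ∈ polyP := by
        refine ⟨?_, ?_, ?_, fun i => ?_⟩ <;>
          simp only [Pi.smul_apply, smul_eq_mul]
        · have := key f1 ht1; rw [hf1] at this; linarith
        · have := key f2 ht2; rw [hf2] at this; linarith
        · have := key f3 ht3; rw [hf3] at this; linarith
        · exact mul_nonneg hinv (h4 i)
      have htmax : t = f1 ∨ t = f2 ∨ t = f3 := by
        rcases max_cases f1 (max f2 f3) with ⟨he, _⟩ | ⟨he, _⟩
        · left; exact he
        · rcases max_cases f2 f3 with ⟨he2, _⟩ | ⟨he2, _⟩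
          · right; left; rw [hts, he, he2]
          · right; right; rw [hts, he, he2]
      rcases htmax with he | he | he
      · left; left
        refine mem_piece hpos htle1 ⟨hyP, ?_⟩
        show (t⁻¹ • x) 0 + (t⁻¹ • x) 3 + 2 * ((t⁻¹ • x) 5 + (t⁻¹ • x) 2) = 1
        simp only [Pi.smul_apply, smul_eq_mul]
        have : t⁻¹ * f1 = 1 := by rw [← he]; exact inv_mul_cancel₀ hpos.ne'
        rw [hf1] at this; linarith
      · left; right
        refine mem_piece hpos htle1 ⟨hyP, ?_⟩
        show (t⁻¹ • x) 5 + (t⁻¹ • x) 1 + 2 * ((t⁻¹ • x) 0 + (t⁻¹ • x) 4) = 1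
        simp only [Pi.smul_apply, smul_eq_mul]
        have : t⁻¹ * f2 = 1 := by rw [← he]; exact inv_mul_cancel₀ hpos.ne'
        rw [hf2] at this; linarith
      · right
        refine mem_piece hpos htle1 ⟨hyP, ?_⟩
        show (t⁻¹ • x) 2 + (t⁻¹ • x) 4 + 2 * ((t⁻¹ • x) 3 + (t⁻¹ • x) 1) = 1
        simp only [Pi.smul_apply, smul_eq_mul]
        have : t⁻¹ * f3 = 1 := by rw [← he]; exact inv_mul_cancel₀ hpos.ne'
        rw [hf3] at this; linarith
  · rintro ((h | h) | h)
    · exact piece_subset h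
    · exact piece_subset h
    · exact piece_subset h
end

section
/- The piece P₁ admits the half-space description P₁ = P ∩ {x₁₂ − 2x₂₃ + x₃₁ ≥ x₁₃ + x₃₂ − 2x₂₁} ∩ {x₁₂ + x₂₃ − 2x₃₁ ≤ x₁₃ − 2x₃₂ + x₂₁}; that is, P₁ is bounded precisely by the hyperplanes x_ij = 0, α₁, θ₁ and θ₂. -/
/-- The target set is convex. -/
lemma target_convex :
    Convex ℝ (polyP ∩ {x : Fin 6 → ℝ | x 3 + x 4 - 2 * x 5 ≤ x 0 - 2 * x 1 + x 2} ∩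
      {x | x 0 + x 1 - 2 * x 2 ≤ x 3 - 2 * x 4 + x 5}) := by
  intro x hx y hy a b ha hb hab
  obtain ⟨⟨⟨hx1, hx2, hx3, hx4⟩, hx5⟩, hx6⟩ := hx
  obtain ⟨⟨⟨hy1, hy2, hy3, hy4⟩, hy5⟩, hy6⟩ := hy
  simp only [Set.mem_inter_iff, Set.mem_setOf_eq, polyP, Pi.add_apply, Pi.smul_apply,
    smul_eq_mul] at *
  refine ⟨⟨⟨?_, ?_, ?_, fun i => ?_⟩, ?_⟩, ?_⟩
  · nlinarith
  · nlinarith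
  · nlinarith
  · have := hx4 i; have := hy4 i; positivity
  · nlinarith
  · nlinarith

/-- `P₁ = P ∩ {x₁₂ − 2x₂₃ + x₃₁ ≥ x₁₃ + x₃₂ − 2x₂₁} ∩
{x₁₂ + x₂₃ − 2x₃₁ ≤ x₁₃ − 2x₃₂ + x₂₁}`: the piece `P₁` is bounded precisely
by the hyperplanes `x_ij = 0`, `α₁`, `θ₁` and `θ₂`. -/
theorem P1_halfspace_description :
    P1 = polyP ∩ {x | x 3 + x 4 - 2 * x 5 ≤ x 0 - 2 * x 1 + x 2} ∩
      {x | x 0 + x 1 - 2 * x 2 ≤ x 3 - 2 * x 4 + x 5} := by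
  apply Set.Subset.antisymm
  · -- convexHull of a subset of a convex set
    apply convexHull_min _ target_convex
    rintro x (hx | ⟨⟨h1, h2, h3, h4⟩, h5⟩)
    · simp only [Set.mem_singleton_iff] at hx
      subst hx
      refine ⟨⟨⟨by norm_num, by norm_num, by norm_num, fun i => le_refl 0⟩, ?_⟩, ?_⟩ <;>
        simp
    · simp only [alpha1, Set.mem_setOf_eq] at h5
      exact ⟨⟨⟨h1, h2, h3, h4⟩, by simp only [Set.mem_setOf_eq]; linarith⟩,
        by simp only [Set.mem_setOf_eq]; linarith⟩
  · rintro x ⟨⟨⟨h1, h2, h3, h4⟩, h5⟩, h6⟩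
    simp only [Set.mem_setOf_eq] at h5 h6
    set t : ℝ := x 0 + x 3 + 2 * (x 5 + x 2) with ht
    have ht0 : 0 ≤ t := by
      have := h4 0; have := h4 2; have := h4 3; have := h4 5; linarith
    rcases eq_or_lt_of_le ht0 with h0 | hpos
    · -- t = 0 forces x = 0
      have hx0 : x = 0 := by
        have e0 : x 0 = 0 := by have := h4 0; have := h4 2; have := h4 3; have := h4 5; linarith
        have e2 : x 2 = 0 := by have := h4 0; have := h4 2; have := h4 3; have := h4 5; linarith
        have e3 : x 3 = 0 := by have := h4 0; have := h4 2; have := h4 3; have := h4 5; linarith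
        have e5 : x 5 = 0 := by have := h4 0; have := h4 2; have := h4 3; have := h4 5; linarith
        have e1 : x 1 = 0 := by have := h4 1; have := h4 4; linarith
        have e4 : x 4 = 0 := by have := h4 1; have := h4 4; linarith
        funext i
        fin_cases i <;> first | exact e0 | exact e1 | exact e2 | exact e3 | exact e4 | exact e5
      rw [hx0]
      exact subset_convexHull ℝ _ (Or.inl rfl)
    · -- scale x by 1/t to land on alpha1
      have htne : t ≠ 0 := ne_of_gt hpos
      set y : Fin 6 → ℝ := t⁻¹ • x with hy
      have hyc : ∀ i, y i = t⁻¹ * x i := fun i => rfl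
      have hinv : 0 < t⁻¹ := inv_pos.mpr hpos
      have hyalpha : y 0 + y 3 + 2 * (y 5 + y 2) = 1 := by
        simp only [hyc]
        have e : t⁻¹ * x 0 + t⁻¹ * x 3 + 2 * (t⁻¹ * x 5 + t⁻¹ * x 2) = t⁻¹ * t := by
          rw [ht]; ring
        rw [e, inv_mul_cancel₀ htne]
      have hyP : y ∈ polyP := by
        refine ⟨le_of_eq hyalpha, ?_, ?_, fun i => ?_⟩
        · simp only [hyc]
          have : t⁻¹ * (x 5 + x 1 + 2 * (x 0 + x 4)) ≤ t⁻¹ * t := by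
            apply mul_le_mul_of_nonneg_left _ (le_of_lt hinv)
            linarith
          rw [inv_mul_cancel₀ htne] at this
          linarith [this]
        · simp only [hyc]
          have : t⁻¹ * (x 2 + x 4 + 2 * (x 3 + x 1)) ≤ t⁻¹ * t := by
            apply mul_le_mul_of_nonneg_left _ (le_of_lt hinv)
            linarith
          rw [inv_mul_cancel₀ htne] at this
          linarith [this]
        · exact mul_nonneg (le_of_lt hinv) (h4 i)
      have hymem : y ∈ ({0} ∪ (polyP ∩ alpha1) : Set (Fin 6 → ℝ)) :=
        Or.inr ⟨hyP, hyalpha⟩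
      have h0mem : (0 : Fin 6 → ℝ) ∈ ({0} ∪ (polyP ∩ alpha1) : Set (Fin 6 → ℝ)) :=
        Or.inl rfl
      have ht1 : t ≤ 1 := h1
      have hcomb := (convex_convexHull ℝ ({0} ∪ (polyP ∩ alpha1)))
        (subset_convexHull ℝ _ hymem) (subset_convexHull ℝ _ h0mem)
        ht0 (by linarith : (0:ℝ) ≤ 1 - t) (by ring)
      have : t • y + (1 - t) • (0 : Fin 6 → ℝ) = x := by
        rw [smul_zero, add_zero, hy, smul_inv_smul₀ htne]
      rwa [this] at hcomb
end

section
/- P₁¹ is the union of the six 6-simplices Δ₁, …, Δ₆ with the following vertex sets (using O=(0,0,0,0,0,0), P₃₁=(0,0,1/2,0,0,0), Q₃₂³¹=(0,0,1/2,0,1/2,0), Q₂₃²¹=(0,1/2,0,0,0,1/2), Q₁₂¹³=(1/2,0,0,1/2,0,0), T₃₁¹³=(0,0,1/3,1/3,0,0), T₂₁¹²=(1/3,0,0,0,0,1/3), R₁=(1/3,1/3,1/3,0,0,0), K₂₁³¹=(0,0,1/4,0,0,1/4), V₁₂³¹=(1/2,0,1/4,0,0,0), V₃₁²³=(0,1/4,1/2,0,0,0)):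 Δ₁ = conv{O, P₃₁, Q₃₂³¹, Q₂₃²¹, T₃₁¹³, T₂₁¹², K₂₁³¹}; Δ₂ = conv{O, P₃₁, Q₃₂³¹, Q₂₃²¹, T₃₁¹³, T₂₁¹², Q₁₂¹³}; Δ₃ = conv{O, P₃₁, Q₃₂³¹, Q₂₃²¹, R₁, T₂₁¹², Q₁₂¹³}; Δ₄ = conv{O, P₃₁, Q₃₂³¹, Q₂₃²¹, T₃₁¹³, R₁, Q₁₂¹³}; Δ₅ = conv{O, P₃₁, Q₃₂³¹, V₁₂³¹, R₁, T₂₁¹², Q₁₂¹³}; Δ₆ = conv{O, P₃₁, Q₃₂³¹, Q₂₃²¹, T₃₁¹³, R₁, V₃₁²³}. Moreover, for i ≠ j the intersection Δ_i ∩ Δ_j has six-dimensional Lebesgue measure zero. -/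
open MeasureTheory

noncomputable section

/-- `P₁¹ = P₁ ∩ {x₁₂+x₂₃+x₃₁ ≥ x₁₃+x₃₂+x₂₁}`. -/
noncomputable def P11 : Set (Fin 6 → ℝ) :=
  P1 ∩ {x | x 3 + x 4 + x 5 ≤ x 0 + x 1 + x 2}

def vO : Fin 6 → ℝ := ![0, 0, 0, 0, 0, 0]
def vP31 : Fin 6 → ℝ := ![0, 0, 1/2, 0, 0, 0]
def vQ3231 : Fin 6 → ℝ := ![0, 0, 1/2, 0, 1/2, 0]
def vQ2321 : Fin 6 → ℝ := ![0, 1/2, 0, 0, 0, 1/2]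
def vQ1213 : Fin 6 → ℝ := ![1/2, 0, 0, 1/2, 0, 0]
def vT3113 : Fin 6 → ℝ := ![0, 0, 1/3, 1/3, 0, 0]
def vT2112 : Fin 6 → ℝ := ![1/3, 0, 0, 0, 0, 1/3]
def vR1 : Fin 6 → ℝ := ![1/3, 1/3, 1/3, 0, 0, 0]
def vK2131 : Fin 6 → ℝ := ![0, 0, 1/4, 0, 0, 1/4]
def vV1231 : Fin 6 → ℝ := ![1/2, 0, 1/4, 0, 0, 0]
def vV3123 : Fin 6 → ℝ := ![0, 1/4, 1/2, 0, 0, 0]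

/-- The six simplices `Δ₁, …, Δ₆` of the triangulation of `P₁¹`. -/
noncomputable def Delta1 : Set (Fin 6 → ℝ) :=
  convexHull ℝ {vO, vP31, vQ3231, vQ2321, vT3113, vT2112, vK2131}
noncomputable def Delta2 : Set (Fin 6 → ℝ) :=
  convexHull ℝ {vO, vP31, vQ3231, vQ2321, vT3113, vT2112, vQ1213}
noncomputable def Delta3 : Set (Fin 6 → ℝ) :=
  convexHull ℝ {vO, vP31, vQ3231, vQ2321, vR1, vT2112, vQ1213}
noncomputable def Delta4 : Set (Fin 6 → ℝ) :=
  convexHull ℝ {vO, vP31, vQ3231, vQ2321, vT3113, vR1, vQ1213}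
noncomputable def Delta5 : Set (Fin 6 → ℝ) :=
  convexHull ℝ {vO, vP31, vQ3231, vV1231, vR1, vT2112, vQ1213}
noncomputable def Delta6 : Set (Fin 6 → ℝ) :=
  convexHull ℝ {vO, vP31, vQ3231, vQ2321, vT3113, vR1, vV3123}

/-- The six simplices listed as a family. -/
noncomputable def Deltas : Fin 6 → Set (Fin 6 → ℝ) :=
  ![Delta1, Delta2, Delta3, Delta4, Delta5, Delta6]


/-! ### Auxiliary machinery -/

@[simp] lemma cons_val_five6 {α : Type*} (a0 a1 a2 a3 a4 a5 : α) :
    (![a0,a1,a2,a3,a4,a5] : Fin 6 → α) 5 = a5 := rfl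
@[simp] lemma cons_val_four6 {α : Type*} (a0 a1 a2 a3 a4 a5 : α) :
    (![a0,a1,a2,a3,a4,a5] : Fin 6 → α) 4 = a4 := rfl
@[simp] lemma cons_val_two6 {α : Type*} (a0 a1 a2 a3 a4 a5 : α) :
    (![a0,a1,a2,a3,a4,a5] : Fin 6 → α) 2 = a2 := rfl
@[simp] lemma cons_val_three6 {α : Type*} (a0 a1 a2 a3 a4 a5 : α) :
    (![a0,a1,a2,a3,a4,a5] : Fin 6 → α) 3 = a3 := rfl
@[simp] lemma cons_val_five7 {α : Type*} (a0 a1 a2 a3 a4 a5 a6 : α) :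
    (![a0,a1,a2,a3,a4,a5,a6] : Fin 7 → α) 5 = a5 := rfl
@[simp] lemma cons_val_six7 {α : Type*} (a0 a1 a2 a3 a4 a5 a6 : α) :
    (![a0,a1,a2,a3,a4,a5,a6] : Fin 7 → α) 6 = a6 := rfl
@[simp] lemma cons_val_four7 {α : Type*} (a0 a1 a2 a3 a4 a5 a6 : α) :
    (![a0,a1,a2,a3,a4,a5,a6] : Fin 7 → α) 4 = a4 := rfl


lemma mem_hull7 (p0 p1 p2 p3 p4 p5 p6 : Fin 6 → ℝ) (x : Fin 6 → ℝ) (w0 w1 w2 w3 w4 w5 w6 : ℝ)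
    (h0 : 0 ≤ w0) (h1 : 0 ≤ w1) (h2 : 0 ≤ w2) (h3 : 0 ≤ w3) (h4 : 0 ≤ w4) (h5 : 0 ≤ w5)
    (h6 : 0 ≤ w6) (hsum : w0 + w1 + w2 + w3 + w4 + w5 + w6 = 1)
    (hx : x = w0 • p0 + w1 • p1 + w2 • p2 + w3 • p3 + w4 • p4 + w5 • p5 + w6 • p6) :
    x ∈ convexHull ℝ ({p0, p1, p2, p3, p4, p5, p6} : Set (Fin 6 → ℝ)) := by
  have hsum' : ∑ i, (![w0,w1,w2,w3,w4,w5,w6] : Fin 7 → ℝ) i = 1 := by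
    rw [Fin.sum_univ_seven]
    simpa using hsum
  have hz : ∀ i : Fin 7, (![p0,p1,p2,p3,p4,p5,p6] : Fin 7 → Fin 6 → ℝ) i ∈
      ({p0, p1, p2, p3, p4, p5, p6} : Set (Fin 6 → ℝ)) := by
    intro i; fin_cases i <;> simp
  have h := Finset.centerMass_mem_convexHull (Finset.univ : Finset (Fin 7))
      (w := ![w0,w1,w2,w3,w4,w5,w6]) (z := ![p0,p1,p2,p3,p4,p5,p6])
      (fun i _ => by fin_cases i <;> simpa)
      (by rw [hsum']; norm_num)
      (fun i _ => hz i)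
  rw [Finset.centerMass_eq_of_sum_1 _ _ hsum'] at h
  have hexp : ∑ i, (![w0,w1,w2,w3,w4,w5,w6] : Fin 7 → ℝ) i • (![p0,p1,p2,p3,p4,p5,p6] : Fin 7 → (Fin 6 → ℝ)) i
      = w0 • p0 + w1 • p1 + w2 • p2 + w3 • p3 + w4 • p4 + w5 • p5 + w6 • p6 := by
    rw [Fin.sum_univ_seven]; simp
  rw [hexp, ← hx] at h
  exact h

/-- H-representation of `P1`. -/
lemma P1_eq_s15 : P1 = {x : Fin 6 → ℝ | (∀ i, 0 ≤ x i) ∧ x 0 + x 3 + 2 * (x 5 + x 2) ≤ 1 ∧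
    x 5 + x 1 + 2 * (x 0 + x 4) ≤ x 0 + x 3 + 2 * (x 5 + x 2) ∧
    x 2 + x 4 + 2 * (x 3 + x 1) ≤ x 0 + x 3 + 2 * (x 5 + x 2)} := by
  apply Set.Subset.antisymm
  · apply convexHull_min
    · rintro z (rfl | ⟨⟨hz1, hz2, hz3, hz4⟩, hz5⟩)
      · refine ⟨fun i => le_rfl, by norm_num, by norm_num, by norm_num⟩
      · have h5 : z 0 + z 3 + 2 * (z 5 + z 2) = 1 := hz5
        exact ⟨hz4, by linarith, by linarith, by linarith⟩
    · intro u hu v hv a b ha hb hab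
      obtain ⟨hu1, hu2, hu3, hu4⟩ := hu
      obtain ⟨hv1, hv2, hv3, hv4⟩ := hv
      have he : ∀ i, (a • u + b • v) i = a * u i + b * v i := fun i => rfl
      refine ⟨fun i => by rw [he]; have := mul_nonneg ha (hu1 i); have := mul_nonneg hb (hv1 i); linarith, ?_, ?_, ?_⟩ <;>
      · simp only [he]
        have h2 := mul_le_mul_of_nonneg_left hu2 ha
        have h3 := mul_le_mul_of_nonneg_left hv2 hb
        have h4 := mul_le_mul_of_nonneg_left hu3 ha
        have h5 := mul_le_mul_of_nonneg_left hv3 hb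
        have h6 := mul_le_mul_of_nonneg_left hu4 ha
        have h7 := mul_le_mul_of_nonneg_left hv4 hb
        nlinarith [hu1 0, hv1 0]
  · rintro x ⟨hpos, hg, hh2, hh3⟩
    set t : ℝ := x 0 + x 3 + 2 * (x 5 + x 2) with ht
    have htnn : 0 ≤ t := by have := hpos 0; have := hpos 2; have := hpos 3; have := hpos 5; positivity
    rcases eq_or_lt_of_le htnn with h0 | h0
    · -- t = 0, x = 0
      have hx0 : x = 0 := by
        have p0 := hpos 0; have p1 := hpos 1; have p2 := hpos 2; have p3 := hpos 3
        have p4 := hpos 4; have p5 := hpos 5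
        have e0 : x 0 = 0 := by linarith
        have e2 : x 2 = 0 := by linarith
        have e3 : x 3 = 0 := by linarith
        have e5 : x 5 = 0 := by linarith
        have e1 : x 1 = 0 := by linarith
        have e4 : x 4 = 0 := by linarith
        funext i; fin_cases i
        · exact e0
        · exact e1
        · exact e2
        · exact e3
        · exact e4
        · exact e5
      rw [hx0]
      exact subset_convexHull ℝ _ (Or.inl rfl)
    · -- t > 0
      set z : Fin 6 → ℝ := t⁻¹ • x with hz
      have hzi : ∀ i, z i = x i / t := fun i => by
        simp [hz, div_eq_inv_mul]
      have hzmem : z ∈ polyP ∩ alpha1 := by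
        have halpha : z 0 + z 3 + 2 * (z 5 + z 2) = 1 := by
          rw [hzi, hzi, hzi, hzi,
            show x 0 / t + x 3 / t + 2 * (x 5 / t + x 2 / t) = (x 0 + x 3 + 2 * (x 5 + x 2)) / t by ring,
            ← ht, div_self (ne_of_gt h0)]
        refine ⟨⟨by rw [halpha], ?_, ?_, fun i => by rw [hzi]; exact div_nonneg (hpos i) htnn⟩, halpha⟩
        · rw [hzi 5, hzi 1, hzi 0, hzi 4, show x 5 / t + x 1 / t + 2 * (x 0 / t + x 4 / t)
              = (x 5 + x 1 + 2 * (x 0 + x 4)) / t by ring, div_le_one h0]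
          linarith
        · rw [hzi 2, hzi 4, hzi 3, hzi 1, show x 2 / t + x 4 / t + 2 * (x 3 / t + x 1 / t)
              = (x 2 + x 4 + 2 * (x 3 + x 1)) / t by ring, div_le_one h0]
          linarith
      have h01 : (0 : Fin 6 → ℝ) ∈ ({0} ∪ (polyP ∩ alpha1) : Set (Fin 6 → ℝ)) := Or.inl rfl
      have hz1 : z ∈ ({0} ∪ (polyP ∩ alpha1) : Set (Fin 6 → ℝ)) := Or.inr hzmem
      have hseg : x ∈ segment ℝ (0 : Fin 6 → ℝ) z := by
        refine ⟨1 - t, t, by linarith, htnn, by ring, ?_⟩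
        rw [smul_zero, zero_add, hz, smul_smul, mul_inv_cancel₀ (ne_of_gt h0), one_smul]
      exact segment_subset_convexHull h01 hz1 hseg

/-! ### Separating functionals for the measure-zero part -/

def Lsum (c : Fin 6 → ℝ) (x : Fin 6 → ℝ) : ℝ :=
  c 0 * x 0 + c 1 * x 1 + c 2 * x 2 + c 3 * x 3 + c 4 * x 4 + c 5 * x 5

def Lmap (c : Fin 6 → ℝ) : (Fin 6 → ℝ) →ₗ[ℝ] ℝ :=
  c 0 • LinearMap.proj 0 + c 1 • LinearMap.proj 1 + c 2 • LinearMap.proj 2 +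
  c 3 • LinearMap.proj 3 + c 4 • LinearMap.proj 4 + c 5 • LinearMap.proj 5

lemma Lmap_apply (c x : Fin 6 → ℝ) : Lmap c x = Lsum c x := by
  simp [Lmap, Lsum, smul_eq_mul]

lemma pair_vol_zero (c : Fin 6 → ℝ) (i0 : Fin 6) (hci : c i0 ≠ 0) (S T : Set (Fin 6 → ℝ))
    (hS : ∀ v ∈ S, Lsum c v ≤ 0) (hT : ∀ v ∈ T, 0 ≤ Lsum c v) :
    volume (convexHull ℝ S ∩ convexHull ℝ T) = 0 := by
  have hker : volume (LinearMap.ker (Lmap c) : Set (Fin 6 → ℝ)) = 0 := by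
    apply Measure.addHaar_submodule
    intro htop
    apply hci
    have := LinearMap.ker_eq_top.1 htop
    have h0 : Lmap c (Pi.single i0 1) = 0 := by rw [this]; rfl
    rw [Lmap_apply] at h0
    fin_cases i0 <;> simpa [Lsum, Pi.single_apply] using h0
  apply measure_mono_null _ hker
  rintro x ⟨hx1, hx2⟩
  have hle : Lmap c x ≤ 0 := by
    have := convexHull_min (fun v hv => by
        show v ∈ {w : Fin 6 → ℝ | Lmap c w ≤ 0}
        rw [Set.mem_setOf_eq, Lmap_apply]; exact hS v hv)
      (convex_halfSpace_le (LinearMap.isLinear (Lmap c)) 0) hx1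
    exact this
  have hge : 0 ≤ Lmap c x := by
    have := convexHull_min (fun v hv => by
        show v ∈ {w : Fin 6 → ℝ | 0 ≤ Lmap c w}
        rw [Set.mem_setOf_eq, Lmap_apply]; exact hT v hv)
      (convex_halfSpace_ge (LinearMap.isLinear (Lmap c)) 0) hx2
    exact this
  exact LinearMap.mem_ker.2 (le_antisymm hle hge)

lemma pair12 : volume (Delta1 ∩ Delta2) = 0 := by
  unfold Delta1 Delta2
  refine pair_vol_zero ![(1:ℝ), (1:ℝ), (0:ℝ), (0:ℝ), (0:ℝ), (-1:ℝ)] 0 (by norm_num) _ _ ?_ ?_ <;>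
  · rintro v hv
    simp only [Set.mem_insert_iff, Set.mem_singleton_iff] at hv
    rcases hv with rfl|rfl|rfl|rfl|rfl|rfl|rfl <;>
      norm_num [Lsum, vO, vP31, vQ3231, vQ2321, vQ1213, vT3113, vT2112, vR1, vK2131, vV1231, vV3123]

lemma pair13 : volume (Delta1 ∩ Delta3) = 0 := by
  unfold Delta1 Delta3
  refine pair_vol_zero ![(1:ℝ), (1:ℝ), (0:ℝ), (-1:ℝ), (0:ℝ), (-1:ℝ)] 0 (by norm_num) _ _ ?_ ?_ <;>
  · rintro v hv
    simp only [Set.mem_insert_iff, Set.mem_singleton_iff] at hv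
    rcases hv with rfl|rfl|rfl|rfl|rfl|rfl|rfl <;>
      norm_num [Lsum, vO, vP31, vQ3231, vQ2321, vQ1213, vT3113, vT2112, vR1, vK2131, vV1231, vV3123]

lemma pair14 : volume (Delta1 ∩ Delta4) = 0 := by
  unfold Delta1 Delta4
  refine pair_vol_zero ![(0:ℝ), (1:ℝ), (0:ℝ), (0:ℝ), (0:ℝ), (-1:ℝ)] 1 (by norm_num) _ _ ?_ ?_ <;>
  · rintro v hv
    simp only [Set.mem_insert_iff, Set.mem_singleton_iff] at hv
    rcases hv with rfl|rfl|rfl|rfl|rfl|rfl|rfl <;>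
      norm_num [Lsum, vO, vP31, vQ3231, vQ2321, vQ1213, vT3113, vT2112, vR1, vK2131, vV1231, vV3123]

lemma pair15 : volume (Delta1 ∩ Delta5) = 0 := by
  unfold Delta1 Delta5
  refine pair_vol_zero ![(1:ℝ), (-1:ℝ), (0:ℝ), (-1:ℝ), (0:ℝ), (-1:ℝ)] 0 (by norm_num) _ _ ?_ ?_ <;>
  · rintro v hv
    simp only [Set.mem_insert_iff, Set.mem_singleton_iff] at hv
    rcases hv with rfl|rfl|rfl|rfl|rfl|rfl|rfl <;>
      norm_num [Lsum, vO, vP31, vQ3231, vQ2321, vQ1213, vT3113, vT2112, vR1, vK2131, vV1231, vV3123]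

lemma pair16 : volume (Delta1 ∩ Delta6) = 0 := by
  unfold Delta1 Delta6
  refine pair_vol_zero ![(-1:ℝ), (1:ℝ), (0:ℝ), (0:ℝ), (0:ℝ), (-1:ℝ)] 0 (by norm_num) _ _ ?_ ?_ <;>
  · rintro v hv
    simp only [Set.mem_insert_iff, Set.mem_singleton_iff] at hv
    rcases hv with rfl|rfl|rfl|rfl|rfl|rfl|rfl <;>
      norm_num [Lsum, vO, vP31, vQ3231, vQ2321, vQ1213, vT3113, vT2112, vR1, vK2131, vV1231, vV3123]

lemma pair23 : volume (Delta2 ∩ Delta3) = 0 := by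
  unfold Delta2 Delta3
  refine pair_vol_zero ![(1:ℝ), (1:ℝ), (0:ℝ), (-1:ℝ), (0:ℝ), (-1:ℝ)] 0 (by norm_num) _ _ ?_ ?_ <;>
  · rintro v hv
    simp only [Set.mem_insert_iff, Set.mem_singleton_iff] at hv
    rcases hv with rfl|rfl|rfl|rfl|rfl|rfl|rfl <;>
      norm_num [Lsum, vO, vP31, vQ3231, vQ2321, vQ1213, vT3113, vT2112, vR1, vK2131, vV1231, vV3123]

lemma pair24 : volume (Delta2 ∩ Delta4) = 0 := by
  unfold Delta2 Delta4
  refine pair_vol_zero ![(0:ℝ), (1:ℝ), (0:ℝ), (0:ℝ), (0:ℝ), (-1:ℝ)] 1 (by norm_num) _ _ ?_ ?_ <;>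
  · rintro v hv
    simp only [Set.mem_insert_iff, Set.mem_singleton_iff] at hv
    rcases hv with rfl|rfl|rfl|rfl|rfl|rfl|rfl <;>
      norm_num [Lsum, vO, vP31, vQ3231, vQ2321, vQ1213, vT3113, vT2112, vR1, vK2131, vV1231, vV3123]

lemma pair25 : volume (Delta2 ∩ Delta5) = 0 := by
  unfold Delta2 Delta5
  refine pair_vol_zero ![(1:ℝ), (-1:ℝ), (0:ℝ), (-1:ℝ), (0:ℝ), (-1:ℝ)] 0 (by norm_num) _ _ ?_ ?_ <;>
  · rintro v hv
    simp only [Set.mem_insert_iff, Set.mem_singleton_iff] at hv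
    rcases hv with rfl|rfl|rfl|rfl|rfl|rfl|rfl <;>
      norm_num [Lsum, vO, vP31, vQ3231, vQ2321, vQ1213, vT3113, vT2112, vR1, vK2131, vV1231, vV3123]

lemma pair26 : volume (Delta2 ∩ Delta6) = 0 := by
  unfold Delta2 Delta6
  refine pair_vol_zero ![(-1:ℝ), (1:ℝ), (0:ℝ), (0:ℝ), (0:ℝ), (-1:ℝ)] 0 (by norm_num) _ _ ?_ ?_ <;>
  · rintro v hv
    simp only [Set.mem_insert_iff, Set.mem_singleton_iff] at hv
    rcases hv with rfl|rfl|rfl|rfl|rfl|rfl|rfl <;>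
      norm_num [Lsum, vO, vP31, vQ3231, vQ2321, vQ1213, vT3113, vT2112, vR1, vK2131, vV1231, vV3123]

lemma pair34 : volume (Delta3 ∩ Delta4) = 0 := by
  unfold Delta3 Delta4
  refine pair_vol_zero ![(-1:ℝ), (1:ℝ), (0:ℝ), (1:ℝ), (0:ℝ), (-1:ℝ)] 0 (by norm_num) _ _ ?_ ?_ <;>
  · rintro v hv
    simp only [Set.mem_insert_iff, Set.mem_singleton_iff] at hv
    rcases hv with rfl|rfl|rfl|rfl|rfl|rfl|rfl <;>
      norm_num [Lsum, vO, vP31, vQ3231, vQ2321, vQ1213, vT3113, vT2112, vR1, vK2131, vV1231, vV3123]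

lemma pair35 : volume (Delta3 ∩ Delta5) = 0 := by
  unfold Delta3 Delta5
  refine pair_vol_zero ![(1:ℝ), (-1:ℝ), (0:ℝ), (-1:ℝ), (0:ℝ), (-1:ℝ)] 0 (by norm_num) _ _ ?_ ?_ <;>
  · rintro v hv
    simp only [Set.mem_insert_iff, Set.mem_singleton_iff] at hv
    rcases hv with rfl|rfl|rfl|rfl|rfl|rfl|rfl <;>
      norm_num [Lsum, vO, vP31, vQ3231, vQ2321, vQ1213, vT3113, vT2112, vR1, vK2131, vV1231, vV3123]

lemma pair36 : volume (Delta3 ∩ Delta6) = 0 := by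
  unfold Delta3 Delta6
  refine pair_vol_zero ![(-1:ℝ), (1:ℝ), (0:ℝ), (0:ℝ), (0:ℝ), (-1:ℝ)] 0 (by norm_num) _ _ ?_ ?_ <;>
  · rintro v hv
    simp only [Set.mem_insert_iff, Set.mem_singleton_iff] at hv
    rcases hv with rfl|rfl|rfl|rfl|rfl|rfl|rfl <;>
      norm_num [Lsum, vO, vP31, vQ3231, vQ2321, vQ1213, vT3113, vT2112, vR1, vK2131, vV1231, vV3123]

lemma pair45 : volume (Delta4 ∩ Delta5) = 0 := by
  unfold Delta4 Delta5
  refine pair_vol_zero ![(1:ℝ), (-1:ℝ), (0:ℝ), (-1:ℝ), (0:ℝ), (-1:ℝ)] 0 (by norm_num) _ _ ?_ ?_ <;>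
  · rintro v hv
    simp only [Set.mem_insert_iff, Set.mem_singleton_iff] at hv
    rcases hv with rfl|rfl|rfl|rfl|rfl|rfl|rfl <;>
      norm_num [Lsum, vO, vP31, vQ3231, vQ2321, vQ1213, vT3113, vT2112, vR1, vK2131, vV1231, vV3123]

lemma pair46 : volume (Delta4 ∩ Delta6) = 0 := by
  unfold Delta4 Delta6
  refine pair_vol_zero ![(-1:ℝ), (1:ℝ), (0:ℝ), (0:ℝ), (0:ℝ), (-1:ℝ)] 0 (by norm_num) _ _ ?_ ?_ <;>
  · rintro v hv
    simp only [Set.mem_insert_iff, Set.mem_singleton_iff] at hv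
    rcases hv with rfl|rfl|rfl|rfl|rfl|rfl|rfl <;>
      norm_num [Lsum, vO, vP31, vQ3231, vQ2321, vQ1213, vT3113, vT2112, vR1, vK2131, vV1231, vV3123]

lemma pair56 : volume (Delta5 ∩ Delta6) = 0 := by
  unfold Delta5 Delta6
  refine pair_vol_zero ![(-1:ℝ), (1:ℝ), (0:ℝ), (0:ℝ), (0:ℝ), (-1:ℝ)] 0 (by norm_num) _ _ ?_ ?_ <;>
  · rintro v hv
    simp only [Set.mem_insert_iff, Set.mem_singleton_iff] at hv
    rcases hv with rfl|rfl|rfl|rfl|rfl|rfl|rfl <;>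
      norm_num [Lsum, vO, vP31, vQ3231, vQ2321, vQ1213, vT3113, vT2112, vR1, vK2131, vV1231, vV3123]

set_option maxHeartbeats 2000000 in
/-- `P₁¹` is the union of the six simplices `Δ₁, …, Δ₆`, and distinct
simplices intersect in a set of measure zero. -/
theorem P11_triangulation :
    P11 = Delta1 ∪ Delta2 ∪ Delta3 ∪ Delta4 ∪ Delta5 ∪ Delta6 ∧
    ∀ i j : Fin 6, i ≠ j → volume (Deltas i ∩ Deltas j) = 0 := by
  constructor
  · apply Set.Subset.antisymm
    · -- P11 ⊆ union
      rintro x ⟨hx1, hs⟩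
      rw [P1_eq_s15] at hx1
      obtain ⟨hpos, hg, hh2, hh3⟩ := hx1
      rw [Set.mem_setOf_eq] at hs
      have p0 := hpos 0; have p1 := hpos 1; have p2 := hpos 2
      have p3 := hpos 3; have p4 := hpos 4; have p5 := hpos 5
      rcases le_total (x 1 + x 3 + x 5) (x 0) with h35 | h35
      · -- Δ5
        refine Or.inl (Or.inr ?_)
        refine mem_hull7 vO vP31 vQ3231 vV1231 vR1 vT2112 vQ1213 x (1 + (-1:ℝ) * x 0 + (-2:ℝ) * x 2 + (-1:ℝ) * x 3 + (-2:ℝ) * x 5) ((-1:ℝ) * x 0 + (-1:ℝ) * x 1 + (2:ℝ) * x 2 + (1:ℝ) * x 3 + (-2:ℝ) * x 4 + (1:ℝ) * x 5) ((2:ℝ) * x 4) ((2:ℝ) * x 0 + (-2:ℝ) * x 1 + (-2:ℝ) * x 3 + (-2:ℝ) * x 5) ((3:ℝ) * x 1) ((3:ℝ) * x 5) ((2:ℝ) * x 3) (by linarith) (by linarith) (by linarith) (by linarith) (by linarith) (by linarith) (by linarith) (by ring) ?_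
        funext i
        fin_cases i <;>
          simp [vO, vP31, vQ3231, vQ2321, vQ1213, vT3113, vT2112, vR1, vK2131, vV1231, vV3123] <;> ring
      · rcases le_total (x 0 + x 1) (x 5) with h12 | h12
        · -- Δ1
          refine Or.inl (Or.inl (Or.inl (Or.inl (Or.inl ?_))))
          refine mem_hull7 vO vP31 vQ3231 vQ2321 vT3113 vT2112 vK2131 x (1 + (-1:ℝ) * x 0 + (-2:ℝ) * x 2 + (-1:ℝ) * x 3 + (-2:ℝ) * x 5) ((2:ℝ) * x 0 + (2:ℝ) * x 1 + (2:ℝ) * x 2 + (-2:ℝ) * x 3 + (-2:ℝ) * x 4 + (-2:ℝ) * x 5) ((2:ℝ) * x 4) ((2:ℝ) * x 1) ((3:ℝ) * x 3) ((3:ℝ) * x 0) ((-4:ℝ) * x 0 + (-4:ℝ) * x 1 + (4:ℝ) * x 5) (by linarith) (by linarith) (by linarith) (by linarith) (by linarith) (by linarith) (by linarith) (by ring) ?_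
          funext i
          fin_cases i <;>
            simp [vO, vP31, vQ3231, vQ2321, vQ1213, vT3113, vT2112, vR1, vK2131, vV1231, vV3123] <;> ring
        · rcases le_total (x 0 + x 5) (x 1) with h46 | h46
          · -- Δ6
            refine Or.inr ?_
            refine mem_hull7 vO vP31 vQ3231 vQ2321 vT3113 vR1 vV3123 x (1 + (-1:ℝ) * x 0 + (-2:ℝ) * x 2 + (-1:ℝ) * x 3 + (-2:ℝ) * x 5) ((2:ℝ) * x 0 + (-4:ℝ) * x 1 + (2:ℝ) * x 2 + (-2:ℝ) * x 3 + (-2:ℝ) * x 4 + (4:ℝ) * x 5) ((2:ℝ) * x 4) ((2:ℝ) * x 5) ((3:ℝ) * x 3) ((3:ℝ) * x 0) ((-4:ℝ) * x 0 + (4:ℝ) * x 1 + (-4:ℝ) * x 5) (by linarith) (by linarith) (by linarith) (by linarith) (by linarith) (by linarith) (by linarith) (by ring) ?_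
            funext i
            fin_cases i <;>
              simp [vO, vP31, vQ3231, vQ2321, vQ1213, vT3113, vT2112, vR1, vK2131, vV1231, vV3123] <;> ring
          · rcases le_total (x 0 + x 1) (x 3 + x 5) with h23 | h23
            · rcases le_total (x 1) (x 5) with h24 | h24
              · -- Δ2
                refine Or.inl (Or.inl (Or.inl (Or.inl (Or.inr ?_))))
                refine mem_hull7 vO vP31 vQ3231 vQ2321 vT3113 vT2112 vQ1213 x (1 + (-1:ℝ) * x 0 + (-2:ℝ) * x 2 + (-1:ℝ) * x 3 + (-2:ℝ) * x 5) ((2:ℝ) * x 0 + (2:ℝ) * x 1 + (2:ℝ) * x 2 + (-2:ℝ) * x 3 + (-2:ℝ) * x 4 + (-2:ℝ) * x 5) ((2:ℝ) * x 4) ((2:ℝ) * x 1) ((-3:ℝ) * x 0 + (-3:ℝ) * x 1 + (3:ℝ) * x 3 + (3:ℝ) * x 5) ((-3:ℝ) * x 1 + (3:ℝ) * x 5) ((2:ℝ) * x 0 + (2:ℝ) * x 1 + (-2:ℝ) * x 5) (by linarith) (by linarith) (by linarith) (by linarith) (by linarith) (by linarith) (by linarith) (by ring) ?_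
                funext i
                fin_cases i <;>
                  simp [vO, vP31, vQ3231, vQ2321, vQ1213, vT3113, vT2112, vR1, vK2131, vV1231, vV3123] <;> ring
              · -- Δ4
                refine Or.inl (Or.inl (Or.inr ?_))
                refine mem_hull7 vO vP31 vQ3231 vQ2321 vT3113 vR1 vQ1213 x (1 + (-1:ℝ) * x 0 + (-2:ℝ) * x 2 + (-1:ℝ) * x 3 + (-2:ℝ) * x 5) ((2:ℝ) * x 0 + (-4:ℝ) * x 1 + (2:ℝ) * x 2 + (-2:ℝ) * x 3 + (-2:ℝ) * x 4 + (4:ℝ) * x 5) ((2:ℝ) * x 4) ((2:ℝ) * x 5) ((-3:ℝ) * x 0 + (3:ℝ) * x 1 + (3:ℝ) * x 3 + (-3:ℝ) * x 5) ((3:ℝ) * x 1 + (-3:ℝ) * x 5) ((2:ℝ) * x 0 + (-2:ℝ) * x 1 + (2:ℝ) * x 5) (by linarith) (by linarith) (by linarith) (by linarith) (by linarith) (by linarith) (by linarith) (by ring) ?_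
                funext i
                fin_cases i <;>
                  simp [vO, vP31, vQ3231, vQ2321, vQ1213, vT3113, vT2112, vR1, vK2131, vV1231, vV3123] <;> ring
            · rcases le_total (x 1 + x 3) (x 0 + x 5) with h34 | h34
              · -- Δ3
                refine Or.inl (Or.inl (Or.inl (Or.inr ?_)))
                refine mem_hull7 vO vP31 vQ3231 vQ2321 vR1 vT2112 vQ1213 x (1 + (-1:ℝ) * x 0 + (-2:ℝ) * x 2 + (-1:ℝ) * x 3 + (-2:ℝ) * x 5) ((-1:ℝ) * x 0 + (-1:ℝ) * x 1 + (2:ℝ) * x 2 + (1:ℝ) * x 3 + (-2:ℝ) * x 4 + (1:ℝ) * x 5) ((2:ℝ) * x 4) ((-1:ℝ) * x 0 + (1:ℝ) * x 1 + (1:ℝ) * x 3 + (1:ℝ) * x 5) (((3/2):ℝ) * x 0 + ((3/2):ℝ) * x 1 + ((-3/2):ℝ) * x 3 + ((-3/2):ℝ) * x 5) (((3/2):ℝ) * x 0 + ((-3/2):ℝ) * x 1 + ((-3/2):ℝ) * x 3 + ((3/2):ℝ) * x 5) ((2:ℝ) * x 3) (by linarith) (by linarith) (by linarith) (by linarith)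 (by linarith) (by linarith) (by linarith) (by ring) ?_
                funext i
                fin_cases i <;>
                  simp [vO, vP31, vQ3231, vQ2321, vQ1213, vT3113, vT2112, vR1, vK2131, vV1231, vV3123] <;> ring
              · -- Δ4
                refine Or.inl (Or.inl (Or.inr ?_))
                refine mem_hull7 vO vP31 vQ3231 vQ2321 vT3113 vR1 vQ1213 x (1 + (-1:ℝ) * x 0 + (-2:ℝ) * x 2 + (-1:ℝ) * x 3 + (-2:ℝ) * x 5) ((2:ℝ) * x 0 + (-4:ℝ) * x 1 + (2:ℝ) * x 2 + (-2:ℝ) * x 3 + (-2:ℝ) * x 4 + (4:ℝ) * x 5) ((2:ℝ) * x 4) ((2:ℝ) * x 5) ((-3:ℝ) * x 0 + (3:ℝ) * x 1 + (3:ℝ) * x 3 + (-3:ℝ) * x 5) ((3:ℝ) * x 1 + (-3:ℝ) * x 5) ((2:ℝ) * x 0 + (-2:ℝ) * x 1 + (2:ℝ) * x 5) (by linarith) (by linarith) (by linarith) (by linarith) (by linarith) (by linarith) (by linarith) (by ring) ?_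
                funext i
                fin_cases i <;>
                  simp [vO, vP31, vQ3231, vQ2321, vQ1213, vT3113, vT2112, vR1, vK2131, vV1231, vV3123] <;> ring

    · -- union ⊆ P11
      have hconv : Convex ℝ P11 := by
        apply Convex.inter
        · rw [P1_eq_s15]
          intro u hu v hv a b ha hb hab
          obtain ⟨hu1, hu2, hu3, hu4⟩ := hu
          obtain ⟨hv1, hv2, hv3, hv4⟩ := hv
          have he : ∀ i, (a • u + b • v) i = a * u i + b * v i := fun i => rfl
          refine ⟨fun i => by rw [he]; have := mul_nonneg ha (hu1 i); have := mul_nonneg hb (hv1 i); linarith, ?_, ?_, ?_⟩ <;>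
          · simp only [he]
            have h2 := mul_le_mul_of_nonneg_left hu2 ha
            have h3 := mul_le_mul_of_nonneg_left hv2 hb
            have h4 := mul_le_mul_of_nonneg_left hu3 ha
            have h5 := mul_le_mul_of_nonneg_left hv3 hb
            have h6 := mul_le_mul_of_nonneg_left hu4 ha
            have h7 := mul_le_mul_of_nonneg_left hv4 hb
            nlinarith
        · intro u hu v hv a b ha hb hab
          rw [Set.mem_setOf_eq] at *
          have he : ∀ i, (a • u + b • v) i = a * u i + b * v i := fun i => rfl
          simp only [he]
          have h2 := mul_le_mul_of_nonneg_left hu ha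
          have h3 := mul_le_mul_of_nonneg_left hv hb
          nlinarith
      have hvert : ∀ v ∈ ({vO, vP31, vQ3231, vQ2321, vQ1213, vT3113, vT2112, vR1, vK2131,
          vV1231, vV3123} : Set (Fin 6 → ℝ)), v ∈ P11 := by
        rintro v hv
        simp only [Set.mem_insert_iff, Set.mem_singleton_iff] at hv
        constructor
        · rw [P1_eq_s15]
          rcases hv with rfl|rfl|rfl|rfl|rfl|rfl|rfl|rfl|rfl|rfl|rfl <;>
            exact ⟨fun i => by fin_cases i <;>
              norm_num [vO, vP31, vQ3231, vQ2321, vQ1213, vT3113, vT2112, vR1, vK2131, vV1231, vV3123],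
              by norm_num [vO, vP31, vQ3231, vQ2321, vQ1213, vT3113, vT2112, vR1, vK2131, vV1231, vV3123],
              by norm_num [vO, vP31, vQ3231, vQ2321, vQ1213, vT3113, vT2112, vR1, vK2131, vV1231, vV3123],
              by norm_num [vO, vP31, vQ3231, vQ2321, vQ1213, vT3113, vT2112, vR1, vK2131, vV1231, vV3123]⟩
        · rcases hv with rfl|rfl|rfl|rfl|rfl|rfl|rfl|rfl|rfl|rfl|rfl <;>
            norm_num [Set.mem_setOf_eq, vO, vP31, vQ3231, vQ2321, vQ1213, vT3113, vT2112, vR1, vK2131, vV1231, vV3123]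
      have hsub : ∀ (s : Set (Fin 6 → ℝ)), s ⊆ {vO, vP31, vQ3231, vQ2321, vQ1213, vT3113, vT2112,
          vR1, vK2131, vV1231, vV3123} → convexHull ℝ s ⊆ P11 := fun s hs =>
        convexHull_min (fun v hv => hvert v (hs hv)) hconv
      rintro x (((((hx | hx) | hx) | hx) | hx) | hx)
      · exact hsub _ (by intro v hv; simp only [Set.mem_insert_iff, Set.mem_singleton_iff] at hv ⊢; tauto) hx
      · exact hsub _ (by intro v hv; simp only [Set.mem_insert_iff, Set.mem_singleton_iff] at hv ⊢; tauto) hx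
      · exact hsub _ (by intro v hv; simp only [Set.mem_insert_iff, Set.mem_singleton_iff] at hv ⊢; tauto) hx
      · exact hsub _ (by intro v hv; simp only [Set.mem_insert_iff, Set.mem_singleton_iff] at hv ⊢; tauto) hx
      · exact hsub _ (by intro v hv; simp only [Set.mem_insert_iff, Set.mem_singleton_iff] at hv ⊢; tauto) hx
      · exact hsub _ (by intro v hv; simp only [Set.mem_insert_iff, Set.mem_singleton_iff] at hv ⊢; tauto) hx
  · intro i j hij
    fin_cases i <;> fin_cases j <;>
      first
        | exact absurd rfl hij
        | simp only [Deltas, Matrix.cons_val_zero, Matrix.cons_val_one, Matrix.head_cons,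
            Matrix.cons_val_two, Matrix.tail_cons, Matrix.cons_val_three, Matrix.cons_val_four,
            cons_val_five6, Matrix.cons_val_succ] <;>
          first
            | exact pair12 | exact pair13 | exact pair14 | exact pair15 | exact pair16
        | exact pair23 | exact pair24 | exact pair25 | exact pair26
        | exact pair34 | exact pair35 | exact pair36
        | exact pair45 | exact pair46 | exact pair56
        | (rw [Set.inter_comm]; first
            | exact pair12 | exact pair13 | exact pair14 | exact pair15 | exact pair16
            | exact pair23 | exact pair24 | exact pair25 | exact pair26
            | exact pair34 | exact pair35 | exact pair36
            | exact pair45 | exact pair46 | exact pair56)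

end
end
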